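/- Let ε̃ be a real symmetric positive-definite 2×2 matrix, w = (w₁,w₂) ∈ ℝ², and t > 0. Define the 3×3 matrix Â in block form by: Â_{ij} = ε̃_{ij} + w_i w_j/t² for i,j ∈ {1,2}; Â_{i3} = Â_{3i} = −w_i/t^{3/2} for i ∈ {1,2}; Â₃₃ = 1/t. Then: (i) Â is symmetric positive definite; (ii) for every nonzero ξ̃ = (ξ₁,ξ₂) ∈ ℝ², the unique root with positive imaginary part of the quadratic z ↦ (ξ₁,ξ₂,z)ᵀ Â (ξ₁,ξ₂,z) is z₊ = (w₁ξ₁ + w₂ξ₂)/√t + i·√t·√(ξ̃ᵀε̃ξ̃). -/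

import Mathlib

open Matrix

/-- The metric `ε̂` in boundary normal coordinates for `μ̂`:
`Â_{ij} = ε̃_{ij} + wᵢwⱼ/t²`, `Â_{i3} = Â_{3i} = −wᵢ/t^{3/2}`, `Â₃₃ = 1/t`. -/
noncomputable def Ahat (ε' : Matrix (Fin 2) (Fin 2) ℝ) (w : Fin 2 → ℝ) (t : ℝ) :
    Matrix (Fin 3) (Fin 3) ℝ :=
  !![ε' 0 0 + w 0 * w 0 / t ^ 2, ε' 0 1 + w 0 * w 1 / t ^ 2, -w 0 / (t * Real.sqrt t);
     ε' 1 0 + w 1 * w 0 / t ^ 2, ε' 1 1 + w 1 * w 1 / t ^ 2, -w 1 / (t * Real.sqrt t);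
     -w 0 / (t * Real.sqrt t), -w 1 / (t * Real.sqrt t), 1 / t]

/-- The complex covector `ξ(z) = (ξ₁, ξ₂, z)`. -/
noncomputable def cvec (ξt : Fin 2 → ℝ) (z : ℂ) : Fin 3 → ℂ :=
  ![(ξt 0 : ℂ), (ξt 1 : ℂ), z]

set_option maxHeartbeats 1000000

/-- `Â` is symmetric positive definite, and for each nonzero tangential frequency `ξ̃`
the unique root with positive imaginary part of `z ↦ ξ(z)ᵀ Â ξ(z)` is
`z₊ = (w₁ξ₁ + w₂ξ₂)/√t + i √t √(ξ̃ᵀε̃ξ̃)`. -/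
theorem Ahat_posDef_and_root (ε' : Matrix (Fin 2) (Fin 2) ℝ) (hε : ε'.PosDef)
    (w : Fin 2 → ℝ) (t : ℝ) (ht : 0 < t) :
    (Ahat ε' w t).PosDef
      ∧ ∀ ξt : Fin 2 → ℝ, ξt ≠ 0 → ∀ z : ℂ,
          (0 < z.im ∧
              cvec ξt z ⬝ᵥ ((Ahat ε' w t).map Complex.ofReal).mulVec (cvec ξt z) = 0)
            ↔ z = (Complex.ofReal ((w 0 * ξt 0 + w 1 * ξt 1) / Real.sqrt t)
                + Complex.I * Complex.ofReal
                   (Real.sqrt t * Real.sqrt (ξt ⬝ᵥ ε'.mulVec ξt))) := by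
  obtain ⟨s, hs, rfl⟩ : ∃ s : ℝ, 0 < s ∧ t = s ^ 2 :=
    ⟨Real.sqrt t, Real.sqrt_pos.2 ht, (Real.sq_sqrt ht.le).symm⟩
  have hst : Real.sqrt (s ^ 2) = s := Real.sqrt_sq hs.le
  have hs0 : s ≠ 0 := hs.ne'
  have hsC : (s : ℂ) ≠ 0 := by exact_mod_cast hs0
  have h10 : ε' 1 0 = ε' 0 1 := by
    have := congrFun (congrFun hε.1 0) 1
    simpa [Matrix.conjTranspose_apply] using this
  constructor
  · refine Matrix.PosDef.of_dotProduct_mulVec_pos ?_ ?_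
    · ext i j
      fin_cases i <;> fin_cases j <;>
        simp [Ahat, Matrix.conjTranspose_apply, h10] <;> ring
    · intro x hx
      have key : x ⬝ᵥ (Ahat ε' w (s ^ 2)).mulVec x
          = ![x 0, x 1] ⬝ᵥ ε'.mulVec ![x 0, x 1]
            + ((w 0 * x 0 + w 1 * x 1) / s ^ 2 - x 2 / s) ^ 2 := by
        simp [Ahat, mulVec, dotProduct, Fin.sum_univ_three, hst]
        ring
      show 0 < x ⬝ᵥ (Ahat ε' w (s ^ 2)).mulVec x
      rw [key]
      by_cases h01 : x 0 = 0 ∧ x 1 = 0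
      · have hx2 : x 2 ≠ 0 := by
          intro h2
          apply hx
          ext i
          fin_cases i <;> simp [h01.1, h01.2, h2]
        have h1 : ![x 0, x 1] ⬝ᵥ ε'.mulVec ![x 0, x 1] = 0 := by
          simp [h01.1, h01.2, mulVec, dotProduct, Fin.sum_univ_two]
        have h2 : (w 0 * x 0 + w 1 * x 1) / s ^ 2 - x 2 / s ≠ 0 := by
          rw [h01.1, h01.2]
          simp [hs0]
          exact fun h => absurd h hx2
        rw [h1, zero_add]
        exact pow_two_pos_of_ne_zero h2
      · have hne : ![x 0, x 1] ≠ 0 := by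
          intro h
          apply h01
          constructor
          · simpa using congrFun h 0
          · simpa using congrFun h 1
        have h1 : 0 < ![x 0, x 1] ⬝ᵥ ε'.mulVec ![x 0, x 1] := by
          have := hε.dotProduct_mulVec_pos hne; rwa [star_trivial] at this
        have h2 := sq_nonneg ((w 0 * x 0 + w 1 * x 1) / s ^ 2 - x 2 / s)
        linarith
  · intro ξt hξ z
    have hQ : 0 < ξt ⬝ᵥ ε'.mulVec ξt := by
      have := hε.dotProduct_mulVec_pos hξ; rwa [star_trivial] at this
    set Q := ξt ⬝ᵥ ε'.mulVec ξt with hQdef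
    set r := Real.sqrt Q with hrdef
    have hr : 0 < r := Real.sqrt_pos.2 hQ
    have hr2C : (r : ℂ) ^ 2 = (Q : ℂ) := by
      have := Real.sq_sqrt hQ.le
      exact_mod_cast this
    set W : ℝ := w 0 * ξt 0 + w 1 * ξt 1 with hW
    have key : cvec ξt z ⬝ᵥ ((Ahat ε' w (s ^ 2)).map Complex.ofReal).mulVec (cvec ξt z)
        = (Q : ℂ) + ((W : ℂ) / (s : ℂ) ^ 2 - z / (s : ℂ)) ^ 2 := by
      simp [Ahat, cvec, mulVec, dotProduct, Fin.sum_univ_three, Matrix.map_apply, hst,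
        hQdef, hW]
      push_cast
      ring
    have e3 : ((W : ℂ) / (s : ℂ) ^ 2 - z / (s : ℂ)) * (s : ℂ) ^ 2 = (W : ℂ) - z * s := by
      rw [sub_mul, div_mul_cancel₀ _ (pow_ne_zero 2 hsC), div_mul_eq_mul_div,
        show ((s : ℂ) ^ 2) = (s : ℂ) * (s : ℂ) from pow_two _,
        mul_div_assoc, mul_div_cancel_left₀ _ hsC]
    have key2 : (cvec ξt z ⬝ᵥ ((Ahat ε' w (s ^ 2)).map Complex.ofReal).mulVec (cvec ξt z))
          * (s : ℂ) ^ 4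
        = (Q : ℂ) * (s : ℂ) ^ 4 + ((W : ℂ) - z * s) ^ 2 := by
      rw [key, add_mul]
      congr 1
      calc ((W : ℂ) / (s : ℂ) ^ 2 - z / (s : ℂ)) ^ 2 * (s : ℂ) ^ 4
          = (((W : ℂ) / (s : ℂ) ^ 2 - z / (s : ℂ)) * (s : ℂ) ^ 2) ^ 2 := by ring
        _ = ((W : ℂ) - z * s) ^ 2 := by rw [e3]
    rw [hst]
    constructor
    · rintro ⟨him, heq⟩
      have heq2 : (Q : ℂ) * (s : ℂ) ^ 4 + ((W : ℂ) - z * s) ^ 2 = 0 := by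
        rw [← key2, heq, zero_mul]
      have hfac : (((W : ℂ) - z * s) - Complex.I * ((s : ℂ) ^ 2 * r))
          * (((W : ℂ) - z * s) + Complex.I * ((s : ℂ) ^ 2 * r)) = 0 := by
        linear_combination heq2 + (s : ℂ) ^ 4 * hr2C
          - ((s : ℂ) ^ 4 * (r : ℂ) ^ 2) * Complex.I_sq
      rcases mul_eq_zero.mp hfac with h | h
      · exfalso
        have hz : z * (s : ℂ) = (W : ℂ) - Complex.I * ((s : ℂ) ^ 2 * r) := by
          linear_combination -h
        have him2 : z.im * s = -(s ^ 2 * r) := by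
          have := congrArg Complex.im hz
          simpa [Complex.mul_im, ← Complex.ofReal_pow] using this
        nlinarith [mul_pos him hs, mul_pos (mul_pos hs hs) hr]
      · have hz : z * (s : ℂ) = (W : ℂ) + Complex.I * ((s : ℂ) ^ 2 * r) := by
          linear_combination -h
        have e4 : ((W / s : ℝ) : ℂ) * (s : ℂ) = (W : ℂ) := by
          rw [← Complex.ofReal_mul, div_mul_cancel₀ _ hs0]
        refine mul_right_cancel₀ hsC ?_
        rw [hz, add_mul, e4]
        push_cast
        ring
    · intro hz
      have him : z.im = s * r := by
        rw [hz]
        simp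
      constructor
      · rw [him]
        exact mul_pos hs hr
      · have e4 : ((W / s : ℝ) : ℂ) * (s : ℂ) = (W : ℂ) := by
          rw [← Complex.ofReal_mul, div_mul_cancel₀ _ hs0]
        have hzs : (W : ℂ) - z * s = -(Complex.I * ((s : ℂ) ^ 2 * r)) := by
          rw [hz, add_mul, e4]
          push_cast
          ring
        have h0 : (cvec ξt z ⬝ᵥ ((Ahat ε' w (s ^ 2)).map Complex.ofReal).mulVec (cvec ξt z))
            * (s : ℂ) ^ 4 = 0 := by
          rw [key2, hzs]
          linear_combination -(s : ℂ) ^ 4 * hr2C + ((s : ℂ) ^ 4 * (r : ℂ) ^ 2) * Complex.I_sq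
        exact (mul_eq_zero.mp h0).resolve_right (pow_ne_zero 4 hsC)
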